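/- Let C ⊆ ℝ^n be a salient polyhedral (finitely generated, closed) convex cone, let r be a nonzero vector spanning an extremal ray of C, and let φ : ℝ^n → ℝ^{n−1} be a surjective linear map whose kernel is the line spanned by r. Then for every nonzero vector s spanning an extremal ray of the cone φ(C), there exists a vector r' ∈ C spanning an extremal ray of C, with r' not a multiple of r, such that φ(r') is a positive multiple of s. -/

import Mathlib

open Finset

/-- The convex cone generated by a set: all finite nonnegative linear combinations. -/
def coneGen {V : Type*} [AddCommGroup V] [Module ℝ V] (S : Set V) : Set V :=
  {x | ∃ (n : ℕ) (c : Fin n → ℝ) (v : Fin n → V),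
    (∀ i, 0 ≤ c i) ∧ (∀ i, v i ∈ S) ∧ x = ∑ i, c i • v i}

/-- A cone is salient if it contains no line. -/
def IsSalient {V : Type*} [AddCommGroup V] [Module ℝ V] (C : Set V) : Prop :=
  ∀ x ∈ C, -x ∈ C → x = 0

/-- A nonzero vector spans an extremal ray of the cone `C`. -/
def IsExtremalVec {V : Type*} [AddCommGroup V] [Module ℝ V] (C : Set V) (v : V) : Prop :=
  v ≠ 0 ∧ v ∈ C ∧ ∀ x y, x ∈ C → y ∈ C → v = x + y →
    (∃ a : ℝ, 0 ≤ a ∧ x = a • v) ∧ (∃ b : ℝ, 0 ≤ b ∧ y = b • v)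

section Aux

variable {V : Type*} [AddCommGroup V] [Module ℝ V] {S : Set V}

lemma mem_coneGen_of_mem {w : V} (hw : w ∈ S) : w ∈ coneGen S :=
  ⟨1, fun _ => 1, fun _ => w, fun _ => zero_le_one, fun _ => hw, by simp⟩

lemma coneGen_zero_mem : (0 : V) ∈ coneGen S :=
  ⟨0, fun i => 0, fun i => 0, fun i => le_rfl, fun i => i.elim0, by simp⟩

lemma coneGen_smul {x : V} (hx : x ∈ coneGen S) {t : ℝ} (ht : 0 ≤ t) :
    t • x ∈ coneGen S := by
  obtain ⟨n, c, v, hc, hv, rfl⟩ := hx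
  exact ⟨n, fun i => t * c i, v, fun i => mul_nonneg ht (hc i), hv, by
    rw [Finset.smul_sum]; exact Finset.sum_congr rfl fun i _ => (mul_smul t (c i) (v i)).symm⟩

lemma coneGen_add {x y : V} (hx : x ∈ coneGen S) (hy : y ∈ coneGen S) :
    x + y ∈ coneGen S := by
  obtain ⟨n, c, v, hc, hv, rfl⟩ := hx
  obtain ⟨m, d, w, hd, hw, rfl⟩ := hy
  refine ⟨n + m, Fin.append c d, Fin.append v w,
    fun i => Fin.addCases (fun j => by simpa using hc j) (fun j => by simpa using hd j) i,
    fun i => Fin.addCases (fun j => by simpa using hv j) (fun j => by simpa using hw j) i, ?_⟩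
  rw [Fin.sum_univ_add]
  simp

lemma sum_mem_aux (T : Set V) (h0 : (0:V) ∈ T)
    (hadd : ∀ a ∈ T, ∀ b ∈ T, a + b ∈ T) {ι : Type*} (I : Finset ι) (f : ι → V)
    (hf : ∀ i ∈ I, f i ∈ T) : ∑ i ∈ I, f i ∈ T := by
  classical
  induction I using Finset.induction with
  | empty => simpa using h0
  | insert _ _ hnot ih =>
    rw [Finset.sum_insert hnot]
    exact hadd _ (hf _ (Finset.mem_insert_self _ _)) _
      (ih fun i hi => hf i (Finset.mem_insert_of_mem hi))

lemma cara {N : ℕ} (g : Fin N → V) (I : Finset (Fin N)) :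
    ∀ c : Fin N → ℝ, (∀ i ∈ I, 0 ≤ c i) →
    ∃ J ⊆ I, LinearIndependent ℝ (fun j : J => g j) ∧
      ∃ d : Fin N → ℝ, (∀ i, 0 ≤ d i) ∧ ∑ i ∈ J, d i • g i = ∑ i ∈ I, c i • g i := by
  classical
  induction I using Finset.strongInduction with
  | _ I ih =>
    intro c hc
    by_cases hli : LinearIndependent ℝ (fun j : I => g j)
    · refine ⟨I, subset_rfl, hli, fun i => if i ∈ I then c i else 0, ?_, ?_⟩
      · intro i; by_cases h : i ∈ I <;> simp [h, hc i]
      · exact Finset.sum_congr rfl fun i hi => by simp only []; rw [if_pos hi]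
    · obtain ⟨f, hfsum, i₀, hi₀⟩ := Fintype.not_linearIndependent_iff.mp hli
      set σ : ℝ := if 0 < f i₀ then 1 else -1 with hσ
      set e : ↥I → ℝ := fun i => σ * f i with he
      have hesum : ∑ i : ↥I, e i • g i = 0 := by
        have : ∑ i : ↥I, e i • g ↑i = σ • ∑ i : ↥I, f i • g ↑i := by
          rw [Finset.smul_sum]
          exact Finset.sum_congr rfl fun i _ => by rw [he]; rw [mul_smul]
        rw [this, hfsum, smul_zero]
      have hei₀ : 0 < e i₀ := by
        rw [he, hσ]
        rcases lt_trichotomy (f i₀) 0 with h | h | h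
        · simp only [if_neg (not_lt.mpr h.le)]; nlinarith
        · exact absurd h hi₀
        · simp only [if_pos h]; linarith
      set d : Fin N → ℝ := fun i => if h : i ∈ I then e ⟨i, h⟩ else 0 with hd
      have hdsum : ∑ i ∈ I, d i • g i = 0 := by
        rw [← Finset.sum_coe_sort I (fun i => d i • g i), ← hesum]
        exact Finset.sum_congr rfl fun i _ => by rw [hd]; simp [i.2]
      set P : Finset (Fin N) := I.filter (fun i => 0 < d i) with hP
      have hi₀P : (i₀ : Fin N) ∈ P := by
        rw [hP, Finset.mem_filter]
        refine ⟨i₀.2, ?_⟩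
        rw [hd]; simpa [i₀.2] using hei₀
      obtain ⟨j, hjP, hjmin⟩ := P.exists_min_image (fun i => c i / d i) ⟨i₀, hi₀P⟩
      have hjI : j ∈ I := (Finset.mem_filter.mp hjP).1
      have hdj : 0 < d j := (Finset.mem_filter.mp hjP).2
      set t : ℝ := c j / d j with htdef
      have ht : 0 ≤ t := div_nonneg (hc j hjI) hdj.le
      set c' : Fin N → ℝ := fun i => c i - t * d i with hc'def
      have hc' : ∀ i ∈ I, 0 ≤ c' i := by
        intro i hiI
        rw [hc'def]
        by_cases hdi : 0 < d i
        · have hiP : i ∈ P := Finset.mem_filter.mpr ⟨hiI, hdi⟩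
          have := hjmin i hiP
          rw [div_le_div_iff₀ hdj hdi] at this
          have hci := hc i hiI
          simp only [htdef]
          rw [div_mul_eq_mul_div, sub_nonneg, div_le_iff₀ hdj]
          linarith
        · have : t * d i ≤ 0 := mul_nonpos_of_nonneg_of_nonpos ht (not_lt.mp hdi)
          have := hc i hiI; simp only; linarith
      have hc'j : c' j = 0 := by
        rw [hc'def]; simp only [htdef]
        field_simp
        ring
      have hsum : ∑ i ∈ I, c' i • g i = ∑ i ∈ I, c i • g i := by
        have : ∑ i ∈ I, c' i • g i = ∑ i ∈ I, c i • g i - t • ∑ i ∈ I, d i • g i := by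
          rw [Finset.smul_sum, ← Finset.sum_sub_distrib]
          exact Finset.sum_congr rfl fun i _ => by rw [hc'def]; rw [sub_smul, mul_smul]
        rw [this, hdsum, smul_zero, sub_zero]
      have herase : ∑ i ∈ I.erase j, c' i • g i = ∑ i ∈ I, c' i • g i :=
        Finset.sum_erase _ (by rw [hc'j, zero_smul])
      obtain ⟨J, hJsub, hli', d', hd', hsum'⟩ :=
        ih (I.erase j) (Finset.erase_ssubset hjI) c'
          (fun i hi => hc' i (Finset.mem_of_mem_erase hi))
      exact ⟨J, hJsub.trans (Finset.erase_subset _ _), hli', d', hd', by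
        rw [hsum', herase, hsum]⟩

end Aux

lemma coneGen_isClosed {m : ℕ} {S : Set (Fin m → ℝ)} (hS : S.Finite) :
    IsClosed (coneGen S) := by
  classical
  set N := hS.toFinset.card with hN
  set e : Fin N ≃ hS.toFinset := hS.toFinset.equivFin.symm with he
  set g : Fin N → (Fin m → ℝ) := fun i => ↑(e i) with hgdef
  have hg : ∀ i, g i ∈ S := fun i => hS.mem_toFinset.mp (e i).2
  have hrange : ∀ w ∈ S, ∃ i, g i = w := by
    intro w hw
    exact ⟨e.symm ⟨w, hS.mem_toFinset.mpr hw⟩, by rw [hgdef]; simp⟩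
  have hrepr : ∀ x ∈ coneGen S, ∃ c : Fin N → ℝ, (∀ i, 0 ≤ c i) ∧ x = ∑ i, c i • g i := by
    intro x hx
    set T : Set (Fin m → ℝ) := {x | ∃ c : Fin N → ℝ, (∀ i, 0 ≤ c i) ∧ x = ∑ i, c i • g i}
      with hT
    have h0 : (0 : Fin m → ℝ) ∈ T := ⟨0, fun i => le_rfl, by simp⟩
    have hadd : ∀ a ∈ T, ∀ b ∈ T, a + b ∈ T := by
      rintro a ⟨ca, hca, rfl⟩ b ⟨cb, hcb, rfl⟩
      exact ⟨ca + cb, fun i => add_nonneg (hca i) (hcb i), by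
        rw [← Finset.sum_add_distrib]
        exact Finset.sum_congr rfl fun i _ => (add_smul (ca i) (cb i) (g i)).symm⟩
    obtain ⟨n, c, v, hc, hv, rfl⟩ := hx
    refine sum_mem_aux T h0 hadd _ _ fun i _ => ?_
    obtain ⟨k, hk⟩ := hrange (v i) (hv i)
    refine ⟨fun j => if j = k then c i else 0, fun j => by dsimp only; split <;> simp [hc i], ?_⟩
    rw [← hk]
    simp [ite_smul]
  have hdecomp : coneGen S =
      ⋃ (σ : {J : Finset (Fin N) // LinearIndependent ℝ (fun j : J => g j)}),
        (fun d : (↥σ.1 → ℝ) => ∑ i : ↥σ.1, d i • g ↑i) '' {d | ∀ i, 0 ≤ d i} := by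
    ext x
    constructor
    · intro hx
      obtain ⟨c, hc, rfl⟩ := hrepr x hx
      obtain ⟨J, -, hli, d, hd, hsum⟩ := cara g Finset.univ c (fun i _ => hc i)
      refine Set.mem_iUnion.mpr ⟨⟨J, hli⟩, ⟨fun i => d ↑i, fun i => hd ↑i, ?_⟩⟩
      dsimp only
      rw [Finset.sum_coe_sort J (fun i => d i • g i), hsum]
    · intro hx
      obtain ⟨σ, d, hd, rfl⟩ := Set.mem_iUnion.mp hx
      exact sum_mem_aux (coneGen S) coneGen_zero_mem
        (fun a ha b hb => coneGen_add ha hb)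
        Finset.univ _ (fun i _ => coneGen_smul (mem_coneGen_of_mem (hg ↑i)) (hd i))
  rw [hdecomp]
  refine isClosed_iUnion_of_finite fun σ => ?_
  obtain ⟨J, hli⟩ := σ
  set L : (↥J → ℝ) →ₗ[ℝ] (Fin m → ℝ) :=
    { toFun := fun d => ∑ i : ↥J, d i • g ↑i
      map_add' := fun a b => by simp [add_smul, Finset.sum_add_distrib]
      map_smul' := fun t a => by simp [Finset.smul_sum, mul_smul] } with hL
  have hinj : Function.Injective L := by
    rw [← LinearMap.ker_eq_bot, LinearMap.ker_eq_bot']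
    intro d hd
    funext i
    exact Fintype.linearIndependent_iff.mp hli d hd i
  obtain ⟨K, hK, hanti⟩ := L.injective_iff_antilipschitz.mp hinj
  have hclos : IsClosed {d : ↥J → ℝ | ∀ i, 0 ≤ d i} := by
    have : {d : ↥J → ℝ | ∀ i, 0 ≤ d i} = ⋂ i, {d | 0 ≤ d i} := by ext; simp [Set.mem_iInter]
    rw [this]
    exact isClosed_iInter fun i => isClosed_le continuous_const (continuous_apply i)
  exact (hanti.isClosedEmbedding L.toContinuousLinearMap.uniformContinuous).isClosedMap _ hclos

theorem edge_of_image_comes_from_extremal_ray {n : ℕ}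
    (C : Set (Fin (n + 1) → ℝ)) (S : Set (Fin (n + 1) → ℝ)) (hS : S.Finite)
    (hC : C = coneGen S) (hsal : IsSalient C)
    (r : Fin (n + 1) → ℝ) (hr : IsExtremalVec C r)
    (φ : (Fin (n + 1) → ℝ) →ₗ[ℝ] (Fin n → ℝ))
    (hsurj : Function.Surjective φ)
    (hker : LinearMap.ker φ = Submodule.span ℝ {r})
    (s : Fin n → ℝ) (hs : s ≠ 0) (hse : IsExtremalVec (φ '' C) s) :
    ∃ r', r' ∈ C ∧ IsExtremalVec C r' ∧ (∀ c : ℝ, r' ≠ c • r) ∧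
      ∃ t : ℝ, 0 < t ∧ φ r' = t • s := by
  classical
  subst hC
  obtain ⟨hr0, hrC, -⟩ := hr
  obtain ⟨-, hsmem, hsext⟩ := hse
  obtain ⟨x, hxC, hφx⟩ := hsmem
  have hφr : φ r = 0 := by
    have : r ∈ LinearMap.ker φ := by
      rw [hker]; exact Submodule.mem_span_singleton_self r
    exact this
  have hCcl : IsClosed (coneGen S) := coneGen_isClosed hS
  set K : Set ℝ := {k : ℝ | x + k • r ∈ coneGen S} with hKdef
  have hK0 : (0:ℝ) ∈ K := by
    show x + (0:ℝ) • r ∈ coneGen S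
    simpa using hxC
  have hKclosed : IsClosed K := by
    have hcont : Continuous fun k : ℝ => x + k • r :=
      continuous_const.add (continuous_id.smul continuous_const)
    exact hCcl.preimage hcont
  have hneg : ∀ a : ℝ, a • r ∈ coneGen S → 0 ≤ a := by
    intro a ha
    by_contra h
    push_neg at h
    have hmr : -r ∈ coneGen S := by
      have hmem := coneGen_smul ha (t := (-a)⁻¹)
        (inv_nonneg.mpr (by linarith))
      rw [smul_smul] at hmem
      have : (-a)⁻¹ * a = -1 := by
        rw [inv_neg, neg_mul, inv_mul_cancel₀ (ne_of_lt h)]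
      rw [this, neg_one_smul] at hmem
      exact hmem
    exact absurd (hsal r hrC hmr) hr0
  have hbdd : BddBelow K := by
    by_contra hb
    have hex : ∀ b : ℝ, ∃ k ∈ K, k < b := by
      intro b
      by_contra h
      push_neg at h
      exact hb ⟨b, fun k hk => h k hk⟩
    choose k hkK hklt using fun m : ℕ => hex (-(m+1))
    have hkneg : ∀ m : ℕ, (0:ℝ) < -(k m) := by
      intro m
      have h1 := hklt m
      have h2 : (0:ℝ) < (m:ℝ) + 1 := by positivity
      linarith
    have hueq : ∀ m, (-(k m))⁻¹ • (x + k m • r) = (-(k m))⁻¹ • x - r := by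
      intro m
      have hkm : k m ≠ 0 := by
        have := hkneg m; intro h; rw [h] at this; simp at this
      rw [smul_add, smul_smul]
      have : (-(k m))⁻¹ * k m = -1 := by
        rw [inv_neg, neg_mul, inv_mul_cancel₀ hkm]
      rw [this, neg_one_smul, ← sub_eq_add_neg]
    have hpos : ∀ m, (0:ℝ) ≤ (-(k m))⁻¹ := fun m => (inv_nonneg).mpr (hkneg m).le
    have humem : ∀ m, (-(k m))⁻¹ • x - r ∈ coneGen S := by
      intro m
      rw [← hueq m]
      exact coneGen_smul (hkK m) (hpos m)
    have hbound : ∀ m : ℕ, (-(k m))⁻¹ ≤ ((m:ℝ)+1)⁻¹ := by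
      intro m
      have h2 : (0:ℝ) < (m:ℝ) + 1 := by positivity
      have h3 : (m:ℝ) + 1 ≤ -(k m) := by have := hklt m; linarith
      exact inv_anti₀ h2 h3
    have htend0 : Filter.Tendsto (fun m : ℕ => ((m:ℝ)+1)⁻¹) Filter.atTop (nhds 0) := by
      simpa only [one_div] using tendsto_one_div_add_atTop_nhds_zero_nat (𝕜 := ℝ)
    have hlim : Filter.Tendsto (fun m : ℕ => (-(k m))⁻¹) Filter.atTop (nhds 0) :=
      squeeze_zero hpos hbound htend0
    have hlim2 : Filter.Tendsto (fun m : ℕ => (-(k m))⁻¹ • x - r) Filter.atTop (nhds (-r)) := by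
      have := (hlim.smul_const x).sub_const r
      simpa using this
    have hmr : -r ∈ coneGen S :=
      hCcl.mem_of_tendsto hlim2 (Filter.Eventually.of_forall humem)
    exact absurd (hsal r hrC hmr) hr0
  set k₀ : ℝ := sInf K with hk₀def
  have hk₀K : k₀ ∈ K := hKclosed.csInf_mem ⟨0, hK0⟩ hbdd
  set r' : Fin (n+1) → ℝ := x + k₀ • r with hr'def
  have hr'C : r' ∈ coneGen S := hk₀K
  have hφr' : φ r' = s := by
    rw [hr'def, map_add, map_smul, hφr, smul_zero, add_zero, hφx]
  -- the component lemma
  have hcomp : ∀ u v : Fin (n+1) → ℝ, ∀ α a β b : ℝ,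
      u ∈ coneGen S → v ∈ coneGen S → u = α • x + a • r → v = β • x + b • r →
      0 ≤ α → 0 ≤ β → α + β = 1 → a + b = k₀ → u = α • r' := by
    intro u v α a β b huC hvC hu hv hα hβ hαβ hab
    rcases eq_or_lt_of_le hα with hα0 | hαpos
    · -- α = 0
      have hβ1 : β = 1 := by linarith
      have hu' : u = a • r := by rw [hu, ← hα0, zero_smul, zero_add]
      have ha0 : 0 ≤ a := hneg a (hu' ▸ huC)
      rcases eq_or_lt_of_le ha0 with ha | ha
      · rw [hu', ← ha, zero_smul, ← hα0, zero_smul]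
      · exfalso
        have hv' : v = x + b • r := by rw [hv, hβ1, one_smul]
        have hbK : b ∈ K := by
          show x + b • r ∈ coneGen S
          rw [← hv']; exact hvC
        have := csInf_le hbdd hbK
        rw [← hk₀def] at this
        linarith
    · -- α > 0
      have hmem : x + (α⁻¹ * a) • r ∈ coneGen S := by
        have h := coneGen_smul huC (t := α⁻¹) (inv_nonneg.mpr hαpos.le)
        rw [hu, smul_add, smul_smul, smul_smul, inv_mul_cancel₀ (ne_of_gt hαpos),
          one_smul] at h
        exact h
      have h1 : k₀ ≤ α⁻¹ * a := by
        have : (α⁻¹ * a) ∈ K := hmem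
        exact csInf_le hbdd this
      have haineq : α * k₀ ≤ a := by
        have h2 := mul_le_mul_of_nonneg_left h1 hαpos.le
        rw [← mul_assoc, mul_inv_cancel₀ (ne_of_gt hαpos), one_mul] at h2
        exact h2
      rcases eq_or_lt_of_le hβ with hβ0 | hβpos
      · -- β = 0
        have hα1 : α = 1 := by linarith
        have hv' : v = b • r := by rw [hv, ← hβ0, zero_smul, zero_add]
        have hb0 : 0 ≤ b := hneg b (hv' ▸ hvC)
        have hb : b = 0 := by
          by_contra hbne
          have hbpos : 0 < b := lt_of_le_of_ne hb0 (Ne.symm hbne)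
          have hu'' : u = x + a • r := by rw [hu, hα1, one_smul]
          have haK : a ∈ K := by
            show x + a • r ∈ coneGen S
            rw [← hu'']; exact huC
          have := csInf_le hbdd haK
          rw [← hk₀def] at this
          linarith
        have ha' : a = k₀ := by linarith
        rw [hu, hα1, one_smul, ha', hr'def, one_smul]
      · -- β > 0
        have hmemb : x + (β⁻¹ * b) • r ∈ coneGen S := by
          have h := coneGen_smul hvC (t := β⁻¹) (inv_nonneg.mpr hβpos.le)
          rw [hv, smul_add, smul_smul, smul_smul, inv_mul_cancel₀ (ne_of_gt hβpos),
            one_smul] at h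
          exact h
        have h1b : k₀ ≤ β⁻¹ * b := csInf_le hbdd hmemb
        have hbineq : β * k₀ ≤ b := by
          have h2 := mul_le_mul_of_nonneg_left h1b hβpos.le
          rw [← mul_assoc, mul_inv_cancel₀ (ne_of_gt hβpos), one_mul] at h2
          exact h2
        have hsumeq : α * k₀ + β * k₀ = k₀ := by rw [← add_mul, hαβ, one_mul]
        have haeq : a = α * k₀ := by linarith
        rw [hu, haeq, hr'def, smul_add, smul_smul]
  -- decomposition extraction
  have hkey : ∀ u v : Fin (n+1) → ℝ, u ∈ coneGen S → v ∈ coneGen S → r' = u + v →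
      ∃ α a β b : ℝ, 0 ≤ α ∧ 0 ≤ β ∧ u = α • x + a • r ∧ v = β • x + b • r ∧
        α + β = 1 ∧ a + b = k₀ := by
    intro u v huC hvC huv
    have hsum : s = φ u + φ v := by
      rw [← hφr', huv, map_add]
    obtain ⟨⟨α, hα, hu⟩, ⟨β, hβ, hv⟩⟩ :=
      hsext (φ u) (φ v) ⟨u, huC, rfl⟩ ⟨v, hvC, rfl⟩ hsum
    have hαβ : α + β = 1 := by
      have h1 : s = (α + β) • s := by
        rw [add_smul, ← hu, ← hv, hsum]
      have h2 : (α + β - 1) • s = 0 := by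
        rw [sub_smul, one_smul, ← h1, sub_self]
      rcases smul_eq_zero.mp h2 with h | h
      · linarith [sub_eq_zero.mp (by linarith [h] : α + β - 1 = 0)]
      · exact absurd h hs
    have hdecu : ∃ a : ℝ, u = α • x + a • r := by
      have hker' : u - α • x ∈ LinearMap.ker φ := by
        rw [LinearMap.mem_ker, map_sub, map_smul, hφx, hu]
        rw [sub_self]
      rw [hker] at hker'
      obtain ⟨a, ha⟩ := Submodule.mem_span_singleton.mp hker'
      exact ⟨a, by rw [ha]; abel⟩
    have hdecv : ∃ b : ℝ, v = β • x + b • r := by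
      have hker' : v - β • x ∈ LinearMap.ker φ := by
        rw [LinearMap.mem_ker, map_sub, map_smul, hφx, hv]
        rw [sub_self]
      rw [hker] at hker'
      obtain ⟨b, hb⟩ := Submodule.mem_span_singleton.mp hker'
      exact ⟨b, by rw [hb]; abel⟩
    obtain ⟨a, hu'⟩ := hdecu
    obtain ⟨b, hv'⟩ := hdecv
    refine ⟨α, a, β, b, hα, hβ, hu', hv', hαβ, ?_⟩
    have heq : x + k₀ • r = (α + β) • x + (a + b) • r := by
      rw [← hr'def, huv, hu', hv', add_smul, add_smul]; abel
    rw [hαβ, one_smul] at heq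
    have : (k₀ - (a + b)) • r = 0 := by
      rw [sub_smul]
      have := congrArg (fun z => z - x - (a+b) • r) heq
      simpa [add_sub_cancel_left] using by linear_combination (norm := module) heq
    rcases smul_eq_zero.mp this with h | h
    · linarith [sub_eq_zero.mp (by linarith [h] : k₀ - (a+b) = 0)]
    · exact absurd h hr0
  refine ⟨r', hr'C, ⟨?_, hr'C, ?_⟩, ?_, 1, one_pos, by rw [hφr', one_smul]⟩
  · intro h
    apply hs
    rw [← hφr', h, map_zero]
  · intro u v huC hvC huv
    obtain ⟨α, a, β, b, hα, hβ, hu', hv', hαβ, hab⟩ := hkey u v huC hvC huv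
    constructor
    · exact ⟨α, hα, hcomp u v α a β b huC hvC hu' hv' hα hβ hαβ hab⟩
    · exact ⟨β, hβ, hcomp v u β b α a hvC huC hv' hu' hβ hα (by linarith) (by linarith)⟩
  · intro c h
    apply hs
    rw [← hφr', h, map_smul, hφr, smul_zero]
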